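/- Let D' ≤ D be positive integers, Q ∈ ℝ^{D×D'} and O ∈ ℝ^{D'×D} satisfy the balancedness condition Qᵀ·Q = O·Oᵀ, and set M = Q·O ∈ ℝ^{D×D}. Then the multiset of eigenvalues (with multiplicity) of the symmetric matrix Mᵀ·M equals the multiset of squares of the eigenvalues (with multiplicity) of the symmetric matrix Qᵀ·Q, together with D − D' additional zeros. Equivalently, the singular values of Q and of O coincide, and for each r the r-th singular value of M equals the square of the r-th singular value of Q (singular values being listed in nonincreasing order). -/

import Mathlib

open Matrix Polynomial

lemma eval_charpoly' {n : Type*} [Fintype n] [DecidableEq n] (A : Matrix n n ℝ) (x : ℝ) :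
    (A.charpoly).eval x = (x • (1 : Matrix n n ℝ) - A).det := by
  rw [Matrix.charpoly, ← Polynomial.coe_evalRingHom, RingHom.map_det]
  congr 1
  ext i j
  rcases eq_or_ne i j with rfl | h
  · simp [Matrix.charmatrix_apply_eq, Matrix.one_apply_eq]
  · simp [Matrix.charmatrix_apply_ne _ _ _ h, Matrix.one_apply_ne h]

lemma charpoly_unitary_conj_diag {n : Type*} [Fintype n] [DecidableEq n]
    (U : Matrix n n ℝ) (hU : U ∈ Matrix.unitaryGroup n ℝ) (v : n → ℝ) :
    (U * Matrix.diagonal v * star U).charpoly = ∏ i, (X - C (v i)) := by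
  apply Polynomial.funext
  intro x
  rw [eval_charpoly', Polynomial.eval_prod]
  simp only [eval_sub, eval_X, eval_C]
  have hUU : U * star U = 1 := mem_unitaryGroup_iff.mp hU
  have h1 : x • (1 : Matrix n n ℝ) - U * Matrix.diagonal v * star U
      = U * (x • (1 : Matrix n n ℝ) - Matrix.diagonal v) * star U := by
    rw [Matrix.mul_sub, Matrix.sub_mul, Matrix.mul_smul, Matrix.smul_mul, mul_one, hUU]
  rw [h1, det_mul, det_mul, mul_comm, ← mul_assoc, mul_comm (det (star U)), ← det_mul, hUU,
    det_one, one_mul]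
  have h2 : x • (1 : Matrix n n ℝ) - Matrix.diagonal v = Matrix.diagonal (fun i => x - v i) := by
    rw [smul_eq_diagonal_mul, mul_one, ← Matrix.diagonal_sub]
  rw [h2, det_diagonal]

lemma isHermitian_charpoly {n : Type*} [Fintype n] [DecidableEq n] {A : Matrix n n ℝ}
    (hA : A.IsHermitian) :
    A.charpoly = ∏ i, (X - C (hA.eigenvalues i)) := by
  have h := hA.spectral_theorem
  have hd : Matrix.diagonal (RCLike.ofReal ∘ hA.eigenvalues) = Matrix.diagonal hA.eigenvalues := by
    congr 1
  rw [hd] at h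
  conv_lhs => rw [h]
  exact charpoly_unitary_conj_diag _ (hA.eigenvectorUnitary).2 _

lemma isHermitian_sq_charpoly {n : Type*} [Fintype n] [DecidableEq n] {A : Matrix n n ℝ}
    (hA : A.IsHermitian) :
    (A * A).charpoly = ∏ i, (X - C (hA.eigenvalues i ^ 2)) := by
  have h := hA.spectral_theorem
  have hd : Matrix.diagonal (RCLike.ofReal ∘ hA.eigenvalues) = Matrix.diagonal hA.eigenvalues := by
    congr 1
  rw [hd] at h
  have hsU : star (hA.eigenvectorUnitary : Matrix n n ℝ) * (hA.eigenvectorUnitary : Matrix n n ℝ)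
      = 1 := mem_unitaryGroup_iff'.mp (hA.eigenvectorUnitary).2
  have hAA : A * A = (hA.eigenvectorUnitary : Matrix n n ℝ) *
      Matrix.diagonal (fun i => hA.eigenvalues i ^ 2) *
      star (hA.eigenvectorUnitary : Matrix n n ℝ) := by
    conv_lhs => rw [h]
    have : Matrix.diagonal (fun i => hA.eigenvalues i ^ 2)
        = Matrix.diagonal hA.eigenvalues * Matrix.diagonal hA.eigenvalues := by
      rw [Matrix.diagonal_mul_diagonal]
      exact congrArg _ (funext fun i => sq (hA.eigenvalues i))
    rw [this]
    simp only [Unitary.conjStarAlgAut_apply, Unitary.coe_star, Matrix.mul_assoc]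
    rw [← Matrix.mul_assoc (star _) _, hsU]
    simp [Matrix.mul_assoc]
  rw [hAA]
  exact charpoly_unitary_conj_diag _ (hA.eigenvectorUnitary).2 _

lemma charpoly_mul_comm_rect {a b : ℕ} (hba : b ≤ a)
    (A : Matrix (Fin a) (Fin b) ℝ) (B : Matrix (Fin b) (Fin a) ℝ) :
    (A * B).charpoly = (B * A).charpoly * X ^ (a - b) := by
  have key : ∀ x : ℝ, x ≠ 0 →
      ((A * B).charpoly).eval x = (((B * A).charpoly) * X ^ (a - b)).eval x := by
    intro x hx
    rw [eval_mul, eval_pow, eval_X, eval_charpoly', eval_charpoly']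
    have h1 : x • (1 : Matrix (Fin a) (Fin a) ℝ) - A * B
        = x • ((1 : Matrix (Fin a) (Fin a) ℝ) - (x⁻¹ • A) * B) := by
      rw [smul_sub, Matrix.smul_mul, smul_smul, mul_inv_cancel₀ hx, one_smul]
    have h2 : x • (1 : Matrix (Fin b) (Fin b) ℝ) - B * A
        = x • ((1 : Matrix (Fin b) (Fin b) ℝ) - B * (x⁻¹ • A)) := by
      rw [smul_sub, Matrix.mul_smul, smul_smul, mul_inv_cancel₀ hx, one_smul]
    rw [h1, h2, det_smul, det_smul, Matrix.det_one_sub_mul_comm, Fintype.card_fin,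
      Fintype.card_fin]
    rw [mul_assoc, mul_comm _ (x ^ (a - b)), ← mul_assoc, ← pow_add,
      Nat.add_sub_cancel' hba, mul_comm (x ^ a)]
  have hinf : {x : ℝ | ((A * B).charpoly - (B * A).charpoly * X ^ (a - b)).IsRoot x}.Infinite := by
    apply Set.Infinite.mono (s := {(0 : ℝ)}ᶜ)
    · intro x hx
      simp only [Set.mem_setOf_eq, IsRoot, eval_sub, sub_eq_zero]
      exact key x hx
    · exact Set.Finite.infinite_compl (Set.finite_singleton 0)
  have := Polynomial.eq_zero_of_infinite_isRoot _ hinf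
  linear_combination (norm := ring_nf) this

lemma roots_prod_X_sub_C'' {n : Type*} [Fintype n] (g : n → ℝ) :
    (∏ i, (X - C (g i))).roots = Multiset.map g Finset.univ.val := by
  have h : ∏ i, (X - C (g i))
      = (Multiset.map (fun a => X - C a) (Multiset.map g Finset.univ.val)).prod := by
    rw [Multiset.map_map]; rfl
  rw [h, Polynomial.roots_multiset_prod_X_sub_C]


/-- **Spectral Coupling**: under the balancedness condition `QᵀQ = OOᵀ` with `M = QO`,
the multiset of eigenvalues (with multiplicity) of the symmetric matrix `MᵀM` equals
the multiset of squares of the eigenvalues (with multiplicity) of the symmetric matrix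
`QᵀQ`, together with `D − D'` additional zeros. -/
theorem spectral_coupling (D D' : ℕ) (hD' : 0 < D') (hDD : D' ≤ D)
    (Q : Matrix (Fin D) (Fin D') ℝ) (O : Matrix (Fin D') (Fin D) ℝ)
    (hbal : Qᵀ * Q = O * Oᵀ)
    (M : Matrix (Fin D) (Fin D) ℝ) (hM : M = Q * O)
    (hMH : (Mᵀ * M).IsHermitian) (hQH : (Qᵀ * Q).IsHermitian) :
    Multiset.map hMH.eigenvalues Finset.univ.val =
      Multiset.map (fun i => (hQH.eigenvalues i) ^ 2) Finset.univ.val +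
        Multiset.replicate (D - D') (0 : ℝ) := by
  classical
  have hN : (Oᵀ * O).IsHermitian := by
    simpa using Matrix.isHermitian_conjTranspose_mul_self O
  have hMM : Mᵀ * M = (Oᵀ * O) * (Oᵀ * O) := by
    rw [hM, Matrix.transpose_mul, Matrix.mul_assoc Oᵀ Qᵀ (Q * O), ← Matrix.mul_assoc Qᵀ Q O,
      hbal]
    simp only [Matrix.mul_assoc]
  have h1 : (Mᵀ * M).charpoly = ∏ i, (X - C (hN.eigenvalues i ^ 2)) := by
    rw [hMM]; exact isHermitian_sq_charpoly hN
  have h2 : (Mᵀ * M).charpoly = ∏ i, (X - C (hMH.eigenvalues i)) := isHermitian_charpoly hMH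
  have h3 : (Oᵀ * O).charpoly = (Qᵀ * Q).charpoly * X ^ (D - D') := by
    have h := charpoly_mul_comm_rect hDD Oᵀ O
    rwa [show O * Oᵀ = Qᵀ * Q from hbal.symm] at h
  -- eigenvalues of OᵀO = eigenvalues of QᵀQ plus zeros
  have hq : ((Qᵀ * Q).charpoly * X ^ (D - D')).roots
      = Multiset.map hQH.eigenvalues Finset.univ.val + Multiset.replicate (D - D') (0 : ℝ) := by
    rw [Polynomial.roots_mul (mul_ne_zero (Matrix.charpoly_monic _).ne_zero
      (pow_ne_zero _ Polynomial.X_ne_zero)), isHermitian_charpoly hQH, roots_prod_X_sub_C'',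
      Polynomial.roots_pow, Polynomial.roots_X, Multiset.nsmul_singleton]
  have e5 : Multiset.map hN.eigenvalues Finset.univ.val
      = Multiset.map hQH.eigenvalues Finset.univ.val + Multiset.replicate (D - D') (0 : ℝ) := by
    rw [← roots_prod_X_sub_C'' hN.eigenvalues, ← isHermitian_charpoly hN, h3, hq]
  have e6 : Multiset.map hMH.eigenvalues Finset.univ.val
      = Multiset.map (fun i => hN.eigenvalues i ^ 2) Finset.univ.val := by
    rw [← roots_prod_X_sub_C'' hMH.eigenvalues, ← h2, h1, roots_prod_X_sub_C'']
  rw [e6, show (fun i => hN.eigenvalues i ^ 2) = (fun t => t ^ 2) ∘ hN.eigenvalues from rfl,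
    ← Multiset.map_map, e5, Multiset.map_add, Multiset.map_map, Multiset.map_replicate]
  simp
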